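/- arXiv:1408.2166 — 2 statements merged into one kernel-verified Lean document; each statement's English description precedes it below -/
import Mathlib

section
/- Let F be a field, J = J_m(0), D = diag(α, α−1, ..., α−(m−1)), and g ∈ F[X] with no constant term. Then (I − g(J))^{-1} D (I − g(J)) = D − (I + g(J) + ··· + g(J)^{m−1}) g'(J) J, where g' is the formal derivative of g. -/
/-- The m×m upper triangular Jordan block with eigenvalue α. -/
def jordanBlock {F : Type*} [Field F] (m : ℕ) (α : F) :
    Matrix (Fin m) (Fin m) F :=
  fun i j => if (i : ℕ) + 1 = (j : ℕ) then 1 else if i = j then α else 0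

open Polynomial Matrix

lemma jb_apply {F : Type*} [Field F] {m : ℕ} (i j : Fin m) :
    jordanBlock m (0 : F) i j = if (i : ℕ) + 1 = (j : ℕ) then 1 else 0 := by
  unfold jordanBlock
  split_ifs <;> rfl

lemma jb_pow_apply {F : Type*} [Field F] {m : ℕ} (k : ℕ) (i j : Fin m) :
    ((jordanBlock m (0 : F)) ^ k) i j = if (i : ℕ) + k = (j : ℕ) then 1 else 0 := by
  induction k generalizing i j with
  | zero =>
    simp [Matrix.one_apply, Fin.ext_iff]
  | succ k ih =>
    rw [pow_succ, Matrix.mul_apply]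
    by_cases h : (i : ℕ) + (k + 1) = (j : ℕ)
    · have hlt : (i : ℕ) + k < m := by omega
      rw [Finset.sum_eq_single (⟨(i : ℕ) + k, hlt⟩ : Fin m)]
      · rw [ih, jb_apply, if_pos rfl,
          if_pos (show ((⟨(i : ℕ) + k, hlt⟩ : Fin m) : ℕ) + 1 = (j : ℕ) by
            simp only [Fin.val_mk]; omega), one_mul, if_pos h]
      · intro b _ hb
        rw [ih, if_neg, zero_mul]
        intro h1
        exact hb (Fin.ext h1.symm)
      · intro hmem; exact absurd (Finset.mem_univ _) hmem
    · rw [if_neg h]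
      apply Finset.sum_eq_zero
      intro b _
      rw [ih, jb_apply]
      split_ifs <;> first | omega | ring

lemma jb_pow_m {F : Type*} [Field F] {m : ℕ} :
    (jordanBlock m (0 : F)) ^ m = 0 := by
  ext i j
  rw [jb_pow_apply]
  have : ¬ ((i : ℕ) + m = (j : ℕ)) := by omega
  simp [this]

lemma comm_DJ {F : Type*} [Field F] {m : ℕ} (α : F) :
    (Matrix.diagonal (fun i : Fin m => α - (i : ℕ))) * jordanBlock m 0 =
      jordanBlock m 0 * (Matrix.diagonal (fun i : Fin m => α - (i : ℕ)))
        + jordanBlock m 0 := by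
  ext i j
  rw [Matrix.add_apply, Matrix.diagonal_mul, Matrix.mul_diagonal, jb_apply]
  split_ifs with h
  · have : (j : ℕ) = (i : ℕ) + 1 := h.symm
    rw [this]
    push_cast
    ring
  · ring

lemma comm_D_pow {F : Type*} [Field F] {m : ℕ} (α : F) (n : ℕ) :
    (Matrix.diagonal (fun i : Fin m => α - (i : ℕ))) * (jordanBlock m 0) ^ n =
      (jordanBlock m 0) ^ n * (Matrix.diagonal (fun i : Fin m => α - (i : ℕ)))
        + (n : F) • (jordanBlock m 0) ^ n := by
  set D := Matrix.diagonal (fun i : Fin m => α - (i : ℕ)) with hD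
  set J := jordanBlock m (0 : F) with hJ
  induction n with
  | zero => simp
  | succ n ih =>
    have : D * J ^ (n + 1) = (D * J ^ n) * J := by
      rw [pow_succ, mul_assoc]
    rw [this, ih, add_mul, smul_mul_assoc, mul_assoc, comm_DJ α, ← hD, ← hJ]
    rw [mul_add, ← mul_assoc, ← pow_succ]
    push_cast
    rw [add_smul, one_smul]
    abel

lemma comm_D_aeval {F : Type*} [Field F] {m : ℕ} (α : F) (p : Polynomial F) :
    (Matrix.diagonal (fun i : Fin m => α - (i : ℕ))) * (aeval (jordanBlock m 0) p) =
      (aeval (jordanBlock m 0) p) * (Matrix.diagonal (fun i : Fin m => α - (i : ℕ)))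
        + (aeval (jordanBlock m 0) (derivative p)) * jordanBlock m 0 := by
  set D := Matrix.diagonal (fun i : Fin m => α - (i : ℕ)) with hD
  set J := jordanBlock m (0 : F) with hJ
  induction p using Polynomial.induction_on' with
  | add p q hp hq =>
    rw [derivative_add, map_add, map_add, mul_add, hp, hq, add_mul, add_mul]
    abel
  | monomial n a =>
    rw [aeval_monomial, derivative_monomial, aeval_monomial,
      Algebra.algebraMap_eq_smul_one, Algebra.algebraMap_eq_smul_one]
    cases n with
    | zero =>
      simp
    | succ k =>
      simp only [smul_mul_assoc, one_mul, Nat.add_sub_cancel, mul_smul_comm]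
      rw [comm_D_pow α, ← hD, ← hJ, ← pow_succ, smul_add, smul_smul]

theorem stmt14 {F : Type*} [Field F] {m : ℕ} (hm : 1 ≤ m) (α : F)
    (g : Polynomial F) (hg : g.coeff 0 = 0) :
    letI J : Matrix (Fin m) (Fin m) F := jordanBlock m 0
    letI D : Matrix (Fin m) (Fin m) F :=
      Matrix.diagonal (fun i : Fin m => α - (i : ℕ))
    (1 - Polynomial.aeval J g)⁻¹ * D * (1 - Polynomial.aeval J g) =
      D - (∑ i ∈ Finset.range m, (Polynomial.aeval J g) ^ i) *
        Polynomial.aeval J (Polynomial.derivative g) * J := by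
  set J : Matrix (Fin m) (Fin m) F := jordanBlock m 0 with hJ
  set D : Matrix (Fin m) (Fin m) F :=
    Matrix.diagonal (fun i : Fin m => α - (i : ℕ)) with hD
  set N : Matrix (Fin m) (Fin m) F := aeval J g with hN
  set S : Matrix (Fin m) (Fin m) F := ∑ i ∈ Finset.range m, N ^ i with hS
  -- N is nilpotent: N^m = 0
  have hXdvd : Polynomial.X ∣ g := (Polynomial.X_dvd_iff).2 hg
  obtain ⟨q, hq⟩ := hXdvd
  have hcomm : ∀ p r : Polynomial F, aeval J p * aeval J r = aeval J r * aeval J p := by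
    intro p r
    rw [← _root_.map_mul, ← _root_.map_mul, mul_comm]
  have hNm : N ^ m = 0 := by
    have : N = J * aeval J q := by
      rw [hN, hq, _root_.map_mul, aeval_X]
    rw [this]
    have hcJq : Commute J (aeval J q) := by
      have := hcomm Polynomial.X q
      rwa [aeval_X] at this
    rw [hcJq.mul_pow]
    have : J ^ m = 0 := jb_pow_m
    rw [this, zero_mul]
  -- S is a two-sided inverse of 1 - N
  have hS1 : S * (1 - N) = 1 := by
    have := geom_sum_mul N m
    rw [hNm] at this
    have h2 : S * (N - 1) = -1 := by rw [hS, this, zero_sub]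
    have : S * (1 - N) = -(S * (N - 1)) := by rw [← mul_neg, neg_sub]
    rw [this, h2, neg_neg]
  have hinv : (1 - N)⁻¹ = S := Matrix.inv_eq_left_inv hS1
  -- the commutator relation
  have hc : D * N = N * D + aeval J (derivative g) * J := comm_D_aeval α g
  rw [hinv]
  have h1 : D * (1 - N) = (1 - N) * D - aeval J (derivative g) * J := by
    rw [mul_sub, sub_mul, mul_one, one_mul, hc]
    abel
  rw [mul_assoc, h1, mul_sub, ← mul_assoc, hS1, one_mul, ← mul_assoc]
end

section
/- Let F have prime characteristic p, D = diag(α, α−1, ..., α−(m−1)) and J = J_m(0) with m > p. The eigenvalues of ad D acting on F[J] are exactly the elements of the prime subfield F_p of F, and for 0 ≤ i < p the eigenspace for eigenvalue i (viewed in F_p) is F[J^p]·J^i = {h(J^p) J^i : h ∈ F[X]}. -/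
section aux
variable {F : Type*} [Field F] {m : ℕ}

private lemma jordan_pow (k : ℕ) (i j : Fin m) :
    ((jordanBlock m (0:F)) ^ k) i j = if (i:ℕ) + k = (j:ℕ) then 1 else 0 := by
  induction k generalizing j with
  | zero => simp [Matrix.one_apply, Fin.ext_iff]
  | succ k ih =>
    rw [pow_succ, Matrix.mul_apply]
    have : ∀ l : Fin m, ((jordanBlock m (0:F)) ^ k) i l * jordanBlock m 0 l j
        = if (i:ℕ) + k = (l:ℕ) ∧ (l:ℕ) + 1 = (j:ℕ) then 1 else 0 := by
      intro l
      rw [ih]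
      simp only [jordanBlock]
      split_ifs with h1 h2 h3 h4 h5 <;> simp_all
    simp only [this]
    by_cases hij : (i:ℕ) + (k+1) = (j:ℕ)
    · have hlt : (i:ℕ) + k < m := by omega
      rw [Finset.sum_eq_single (⟨(i:ℕ)+k, hlt⟩ : Fin m)]
      · simp [hij]; omega
      · intro b _ hb
        rw [if_neg]
        rintro ⟨h1, -⟩
        exact hb (Fin.ext h1.symm)
      · simp
    · rw [if_neg hij, Finset.sum_eq_zero]
      intro b _
      rw [if_neg]
      rintro ⟨h1, h2⟩
      omega

private lemma aeval_jordan (q : Polynomial F) (i j : Fin m) :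
    (Polynomial.aeval (jordanBlock m (0:F)) q) i j =
      if (i:ℕ) ≤ (j:ℕ) then q.coeff ((j:ℕ) - (i:ℕ)) else 0 := by
  rw [Polynomial.aeval_eq_sum_range, Matrix.sum_apply]
  have : ∀ k ∈ Finset.range (q.natDegree + 1),
      (q.coeff k • (jordanBlock m (0:F)) ^ k) i j
        = if (i:ℕ) + k = (j:ℕ) then q.coeff k else 0 := by
    intro k _
    rw [Matrix.smul_apply, jordan_pow, smul_ite, smul_eq_mul, mul_one, smul_zero]
  rw [Finset.sum_congr rfl this]
  by_cases hij : (i:ℕ) ≤ (j:ℕ)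
  · rw [if_pos hij]
    have hcong : ∀ k ∈ Finset.range (q.natDegree + 1),
        (if (i:ℕ) + k = (j:ℕ) then q.coeff k else 0)
          = if k = (j:ℕ) - (i:ℕ) then q.coeff k else 0 := by
      intro k _
      exact if_congr (by omega) rfl rfl
    rw [Finset.sum_congr rfl hcong, Finset.sum_ite_eq']
    split_ifs with h
    · rfl
    · rw [Polynomial.coeff_eq_zero_of_natDegree_lt]
      simp only [Finset.mem_range] at h
      omega
  · rw [if_neg hij, Finset.sum_eq_zero]
    intro k _
    rw [if_neg]
    omega

private lemma adD_iff (α : F) (c : F) (A : Matrix (Fin m) (Fin m) F) :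
    (Matrix.diagonal (fun i : Fin m => α - (i:ℕ)) * A
      - A * Matrix.diagonal (fun i : Fin m => α - (i:ℕ)) = c • A)
    ↔ ∀ i j : Fin m, (((j:ℕ):F) - ((i:ℕ):F)) * A i j = c * A i j := by
  constructor
  · intro h i j
    have := congrFun (congrFun h i) j
    simp only [Matrix.sub_apply, Matrix.diagonal_mul, Matrix.mul_diagonal,
      Matrix.smul_apply, smul_eq_mul] at this
    rw [← this]; ring
  · intro h
    ext i j
    simp only [Matrix.sub_apply, Matrix.diagonal_mul, Matrix.mul_diagonal,
      Matrix.smul_apply, smul_eq_mul]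
    rw [← h i j]; ring

/-- Eigen-equation for `aeval J q` in terms of coefficients of `q`. -/
private lemma eigen_coeff_iff (α : F) (c : F) (q : Polynomial F) :
    (Matrix.diagonal (fun i : Fin m => α - (i:ℕ)) * (Polynomial.aeval (jordanBlock m (0:F)) q)
      - (Polynomial.aeval (jordanBlock m (0:F)) q) *
          Matrix.diagonal (fun i : Fin m => α - (i:ℕ))
      = c • (Polynomial.aeval (jordanBlock m (0:F)) q))
    ↔ ∀ k, k < m → ((k:ℕ):F) * q.coeff k = c * q.coeff k := by
  rw [adD_iff]
  constructor
  · intro h k hk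
    have h0 : (0:ℕ) < m := lt_of_le_of_lt (Nat.zero_le k) hk
    have := h ⟨0, h0⟩ ⟨k, hk⟩
    rw [aeval_jordan] at this
    simpa using this
  · intro h i j
    rw [aeval_jordan]
    by_cases hij : (i:ℕ) ≤ (j:ℕ)
    · rw [if_pos hij]
      have hk : (j:ℕ) - (i:ℕ) < m := lt_of_le_of_lt (Nat.sub_le _ _) j.isLt
      have := h ((j:ℕ) - (i:ℕ)) hk
      have hcast : (((j:ℕ) - (i:ℕ) : ℕ) : F) = ((j:ℕ):F) - ((i:ℕ):F) := by
        push_cast [hij]; ring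
      rw [hcast] at this
      exact this
    · rw [if_neg hij, mul_zero, mul_zero]

end aux

theorem stmt18 {F : Type*} [Field F] {p : ℕ} [Fact p.Prime] [CharP F p]
    {m : ℕ} (hm : p < m) (α : F) :
    letI J : Matrix (Fin m) (Fin m) F := jordanBlock m 0
    letI D : Matrix (Fin m) (Fin m) F :=
      Matrix.diagonal (fun i : Fin m => α - (i : ℕ))
    -- every eigenvalue of ad D on F[J] lies in the prime subfield
    (∀ (c : F) (q : Polynomial F), Polynomial.aeval J q ≠ 0 →
      D * Polynomial.aeval J q - Polynomial.aeval J q * D =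
        c • Polynomial.aeval J q →
      ∃ i : ℕ, i < p ∧ c = (i : F)) ∧
    -- every element of the prime subfield is an eigenvalue
    (∀ i : ℕ, i < p → ∃ A : Matrix (Fin m) (Fin m) F,
      (∃ q : Polynomial F, A = Polynomial.aeval J q) ∧ A ≠ 0 ∧
      D * A - A * D = (i : F) • A) ∧
    -- the eigenspace of i (0 ≤ i < p) is F[J^p]·J^i
    (∀ i : ℕ, i < p → ∀ A : Matrix (Fin m) (Fin m) F,
      ((∃ q : Polynomial F, A = Polynomial.aeval J q) ∧
        D * A - A * D = (i : F) • A) ↔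
      ∃ h : Polynomial F, A = Polynomial.aeval (J ^ p) h * J ^ i) := by
  have hp : 0 < p := (Fact.out : p.Prime).pos
  refine ⟨?_, ?_, ?_⟩
  -- Part 1
  · intro c q hq0 heq
    rw [eigen_coeff_iff] at heq
    -- find a nonzero coefficient with index < m
    obtain ⟨a, ha⟩ : ∃ a, (Polynomial.aeval (jordanBlock m (0:F)) q) a ≠ 0 := by
      by_contra h
      push_neg at h
      exact hq0 (funext h)
    obtain ⟨b, hb⟩ : ∃ b, (Polynomial.aeval (jordanBlock m (0:F)) q) a b ≠ 0 := by
      by_contra h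
      push_neg at h
      exact ha (funext h)
    rw [aeval_jordan] at hb
    by_cases hab : (a:ℕ) ≤ (b:ℕ)
    · rw [if_pos hab] at hb
      set k := (b:ℕ) - (a:ℕ) with hk
      have hkm : k < m := lt_of_le_of_lt (Nat.sub_le _ _) b.isLt
      have hc : (k:F) = c := by
        have := heq k hkm
        rw [mul_eq_mul_right_iff] at this
        rcases this with h | h
        · exact h
        · exact absurd h hb
      refine ⟨k % p, Nat.mod_lt _ hp, ?_⟩
      rw [← hc]
      exact (CharP.natCast_eq_natCast F p).2 (Nat.mod_modEq k p).symm
    · rw [if_neg hab] at hb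
      exact absurd rfl hb
  -- Part 2
  · intro i hi
    have him : i < m := lt_trans hi hm
    refine ⟨(jordanBlock m (0:F)) ^ i, ⟨Polynomial.X ^ i, by rw [map_pow, Polynomial.aeval_X]⟩,
      ?_, ?_⟩
    · intro h
      have h0 : 0 < m := lt_of_le_of_lt (Nat.zero_le i) him
      have := congrFun (congrFun h ⟨0, h0⟩) ⟨i, him⟩
      rw [jordan_pow] at this
      simp at this
    · have : (jordanBlock m (0:F)) ^ i
          = Polynomial.aeval (jordanBlock m (0:F)) ((Polynomial.X : Polynomial F) ^ i) := by
        rw [map_pow, Polynomial.aeval_X]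
      rw [this, eigen_coeff_iff]
      intro k hk
      rw [Polynomial.coeff_X_pow]
      by_cases hki : k = i
      · subst hki; simp
      · simp [hki]
  -- Part 3
  · intro i hi A
    constructor
    · rintro ⟨⟨q, rfl⟩, heq⟩
      rw [eigen_coeff_iff] at heq
      -- constraint: nonzero coefficients are ≡ i mod p
      have hcon : ∀ k, k < m → q.coeff k ≠ 0 → k % p = i % p := by
        intro k hk hne
        have := heq k hk
        have hki : (k:F) = (i:F) := by
          rw [mul_eq_mul_right_iff] at this
          rcases this with h | h
          · exact h
          · exact absurd h hne
        exact (CharP.natCast_eq_natCast F p).1 hki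
      set h : Polynomial F := ∑ j ∈ Finset.range m,
        Polynomial.monomial j (if j * p + i < m then q.coeff (j * p + i) else 0) with hh
      have hcoeff : ∀ j, h.coeff j
          = if j ∈ Finset.range m then
              (if j * p + i < m then q.coeff (j * p + i) else 0) else 0 := by
        intro j
        rw [hh, Polynomial.finset_sum_coeff]
        simp only [Polynomial.coeff_monomial]
        rw [Finset.sum_ite_eq']
      refine ⟨h, ?_⟩
      have hrhs : Polynomial.aeval ((jordanBlock m (0:F)) ^ p) h * (jordanBlock m (0:F)) ^ i
          = Polynomial.aeval (jordanBlock m (0:F))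
              (Polynomial.expand F p h * Polynomial.X ^ i) := by
        rw [map_mul, Polynomial.expand_aeval, map_pow, Polynomial.aeval_X]
      rw [hrhs]
      -- coefficient comparison below degree m
      have hkey : ∀ k, k < m →
          (Polynomial.expand F p h * Polynomial.X ^ i).coeff k = q.coeff k := by
        intro k hk
        rw [Polynomial.coeff_mul_X_pow', ]
        by_cases hik : i ≤ k
        · rw [if_pos hik, Polynomial.coeff_expand hp]
          by_cases hd : p ∣ k - i
          · rw [if_pos hd, hcoeff]
            have h1 : (k - i) / p < m :=
              lt_of_le_of_lt (le_trans (Nat.div_le_self _ _) (Nat.sub_le _ _)) hk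
            rw [if_pos (Finset.mem_range.2 h1)]
            have h2 : (k - i) / p * p + i = k := by
              rw [Nat.div_mul_cancel hd]; omega
            rw [h2, if_pos hk]
          · rw [if_neg hd]
            by_contra hne
            have := hcon k hk (fun hz => hne hz.symm)
            rw [Nat.mod_eq_of_lt hi] at this
            apply hd
            have : k - i = p * (k / p) := by
              have := Nat.div_add_mod k p
              omega
            rw [this]
            exact Dvd.intro _ rfl
        · rw [if_neg hik]
          by_contra hne
          have := hcon k hk (fun hz => hne hz.symm)
          rw [Nat.mod_eq_of_lt hi] at this
          have : i ≤ k := le_trans (le_of_eq this.symm) (Nat.mod_le k p)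
          exact hik this
      ext a b
      rw [aeval_jordan, aeval_jordan]
      by_cases hab : (a:ℕ) ≤ (b:ℕ)
      · rw [if_pos hab, if_pos hab,
          hkey _ (lt_of_le_of_lt (Nat.sub_le _ _) b.isLt)]
      · rw [if_neg hab, if_neg hab]
    · rintro ⟨h, rfl⟩
      set q : Polynomial F := Polynomial.expand F p h * Polynomial.X ^ i with hq
      have hA : Polynomial.aeval ((jordanBlock m (0:F)) ^ p) h * (jordanBlock m (0:F)) ^ i
          = Polynomial.aeval (jordanBlock m (0:F)) q := by
        rw [hq, map_mul, Polynomial.expand_aeval, map_pow, Polynomial.aeval_X]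
      refine ⟨⟨q, hA⟩, ?_⟩
      rw [hA, eigen_coeff_iff]
      intro k hk
      rw [hq, Polynomial.coeff_mul_X_pow']
      by_cases hik : i ≤ k
      · rw [if_pos hik, Polynomial.coeff_expand hp]
        by_cases hd : p ∣ k - i
        · rw [if_pos hd]
          have : (k:F) = (i:F) := by
            have h1 : ((k - i : ℕ) : F) = 0 := (CharP.cast_eq_zero_iff F p _).2 hd
            have h2 : k = (k - i) + i := by omega
            rw [h2]
            push_cast
            rw [h1, zero_add]
          rw [this]
        · rw [if_neg hd, mul_zero, mul_zero]
      · rw [if_neg hik, mul_zero, mul_zero]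
end
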